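/- Let d ≥ 1, let μ be the normalized Haar probability measure on the unitary group U(d), let e₀ be a fixed standard basis vector of ℂ^d, and let S be the swap operator on ℂ^d⊗ℂ^d. Then the Haar average of two copies of a Haar-random pure state equals the normalized symmetric projector: entrywise, ∫_{U(d)} (W|e₀⟩⟨e₀|W†) ⊗ (W|e₀⟩⟨e₀|W†) dμ(W) = (I + S)/(d(d+1)). -/
import Mathlib


open MeasureTheory Matrix
open scoped Kronecker

set_option linter.unusedSectionVars false

section HaarAux


noncomputable def rc : ℂ := ((Real.sqrt 2)⁻¹ : ℝ)

theorem rc_mul_rc : rc * rc = 1 / 2 := by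
  unfold rc
  rw [← Complex.ofReal_mul, ← mul_inv, Real.mul_self_sqrt (by norm_num)]
  norm_num

theorem rc_real : (starRingEnd ℂ) rc = rc := Complex.conj_ofReal _

variable {d : ℕ}

theorem sum_two {a b : Fin d} (hab : a ≠ b) (u v : ℂ) (h : Fin d → ℂ) :
    ∑ k, (if k = a then u else if k = b then v else 0) * h k = u * h a + v * h b := by
  have key : ∀ k ∈ Finset.univ, (if k = a then u else if k = b then v else 0) * h k
      = (if k = a then u * h k else 0) + (if k = b then v * h k else 0) := by
    intro k _
    by_cases h1 : k = a
    · subst h1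
      simp [hab]
    · by_cases h2 : k = b <;> simp [h1, h2, Ne.symm hab]
  rw [Finset.sum_congr rfl key, Finset.sum_add_distrib]
  simp [Finset.sum_ite_eq']

noncomputable def rotM (a b : Fin d) : Matrix (Fin d) (Fin d) ℂ :=
  Matrix.of fun x k =>
    if x = a then (if k = a then rc else if k = b then rc else 0)
    else if x = b then (if k = a then rc else if k = b then -rc else 0)
    else (if k = x then 1 else 0)

theorem rc_ne : rc ≠ 0 ∧ (starRingEnd ℂ) rc = rc := ⟨by
    intro h
    have := rc_mul_rc
    rw [h] at this
    norm_num at this, rc_real⟩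

theorem rotM_real (a b : Fin d) (x k : Fin d) : star (rotM a b x k) = rotM a b x k := by
  unfold rotM
  simp only [Matrix.of_apply]
  split_ifs <;> simp [Complex.star_def, rc_real]

theorem rotM_col_a (a b : Fin d) (hab : a ≠ b) (z : Fin d) :
    rotM a b z a = (if z = a then rc else if z = b then rc else 0) := by
  unfold rotM
  by_cases h1 : z = a
  · simp [h1]
  · by_cases h2 : z = b
    · simp [h1, h2, hab, Ne.symm hab]
    · have h3 : ¬ a = z := fun h => h1 h.symm
      simp [h1, h2, h3]

theorem rotM_col_b (a b : Fin d) (hab : a ≠ b) (z : Fin d) :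
    rotM a b z b = (if z = a then rc else if z = b then -rc else 0) := by
  unfold rotM
  by_cases h1 : z = a
  · simp [h1, hab, Ne.symm hab]
  · by_cases h2 : z = b
    · simp [h1, h2, Ne.symm hab]
    · have h3 : ¬ b = z := fun h => h2 h.symm
      simp [h1, h2, h3]

theorem rotM_mem (a b : Fin d) (hab : a ≠ b) : rotM a b ∈ Matrix.unitaryGroup (Fin d) ℂ := by
  rw [Matrix.mem_unitaryGroup_iff]
  ext x y
  rw [Matrix.mul_apply]
  have hstar : ∀ k, (star (rotM a b)) k y = rotM a b y k := fun k => by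
    rw [Matrix.star_apply, rotM_real]
  simp only [hstar]
  have hba : ¬ b = a := Ne.symm hab
  rw [Matrix.one_apply]
  by_cases hx1 : x = a
  · have hrow : ∀ k, rotM a b x k = if k = a then rc else if k = b then rc else 0 := by
      intro k; unfold rotM; simp [hx1]
    rw [Finset.sum_congr rfl (fun k _ => by rw [hrow k] :
      ∀ k ∈ Finset.univ, rotM a b x k * rotM a b y k
        = (if k = a then rc else if k = b then rc else 0) * rotM a b y k)]
    rw [sum_two hab, rotM_col_a a b hab, rotM_col_b a b hab]
    by_cases hy1 : y = a
    · simp only [hy1, if_pos rfl, hx1, if_true]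
      linear_combination 2 * rc_mul_rc
    · by_cases hy2 : y = b
      · have hxy : ¬ x = y := by rw [hx1, hy2]; exact hab
        have hxb : ¬ x = b := by rw [hx1]; exact hab
        simp [hy1, hy2, hba, hxy, hxb]
      · have : ¬ x = y := by rw [hx1]; exact fun h => hy1 h.symm
        simp [hy1, hy2, this]
  · by_cases hx2 : x = b
    · have hrow : ∀ k, rotM a b x k = if k = a then rc else if k = b then -rc else 0 := by
        intro k; unfold rotM; simp [hx1, hx2, hba]
      rw [Finset.sum_congr rfl (fun k _ => by rw [hrow k] :
        ∀ k ∈ Finset.univ, rotM a b x k * rotM a b y k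
          = (if k = a then rc else if k = b then -rc else 0) * rotM a b y k)]
      rw [sum_two hab, rotM_col_a a b hab, rotM_col_b a b hab]
      by_cases hy1 : y = a
      · have hxy : ¬ x = y := by rw [hx2, hy1]; exact Ne.symm hab
        simp [hy1, hba, hxy, hab, hx1]
      · by_cases hy2 : y = b
        · have hxy : x = y := by rw [hx2, hy2]
          simp [hy2, hba, hxy]
          linear_combination 2 * rc_mul_rc
        · have hxy : ¬ x = y := by rw [hx2]; exact fun h => hy2 h.symm
          simp [hy1, hy2, hxy]
    · have hrow : ∀ k, rotM a b x k = if k = x then 1 else 0 := by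
        intro k; unfold rotM; simp [hx1, hx2]
      rw [Finset.sum_congr rfl (fun k _ => by
        rw [hrow k]; split_ifs <;> simp :
        ∀ k ∈ Finset.univ, rotM a b x k * rotM a b y k
          = if k = x then rotM a b y k else 0)]
      rw [Finset.sum_ite_eq' Finset.univ x (fun k => rotM a b y k)]
      simp only [Finset.mem_univ, if_true]
      unfold rotM
      by_cases hy1 : y = a
      · have hxy : ¬ x = y := by rw [hy1]; exact hx1
        simp [hy1, hx1, hx2, hxy]
      · by_cases hy2 : y = b
        · have hxy : ¬ x = y := by rw [hy2]; exact hx2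
          simp [hy1, hy2, hx1, hx2, hba, hxy]
        · simp [hy1, hy2]


theorem col_sum (W : Matrix.unitaryGroup (Fin d) ℂ) (i : Fin d) :
    ∑ k, W.1 k i * (starRingEnd ℂ) (W.1 k i) = 1 := by
  have h := W.2.1
  have h2 : (star W.1 * W.1) i i = (1 : Matrix (Fin d) (Fin d) ℂ) i i := by rw [h]
  rw [Matrix.mul_apply] at h2
  simp only [Matrix.star_apply, Matrix.one_apply_eq] at h2
  rw [← h2]
  exact Finset.sum_congr rfl fun k _ => by
    simp [Complex.star_def]; ring

theorem normSq_col_sum (W : Matrix.unitaryGroup (Fin d) ℂ) (i : Fin d) :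
    ∑ k, Complex.normSq (W.1 k i) = 1 := by
  have h2 : ∑ k, (Complex.normSq (W.1 k i) : ℂ) = 1 := by
    rw [← col_sum W i]
    exact Finset.sum_congr rfl fun k _ => by
      rw [Complex.normSq_eq_conj_mul_self]; ring
  have := congrArg Complex.re h2
  simpa using this

theorem entry_norm_le (W : Matrix.unitaryGroup (Fin d) ℂ) (a i : Fin d) :
    ‖W.1 a i‖ ≤ 1 := by
  have h4 : Complex.normSq (W.1 a i) ≤ 1 := by
    rw [← normSq_col_sum W i]
    exact Finset.single_le_sum (f := fun k => Complex.normSq (W.1 k i))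
      (fun k _ => Complex.normSq_nonneg _) (Finset.mem_univ a)
  have h5 : ‖W.1 a i‖ ^ 2 ≤ 1 := by rwa [← Complex.sq_norm] at h4
  nlinarith [norm_nonneg (W.1 a i)]

theorem cont_entry (a b : Fin d) : Continuous (fun W : Matrix.unitaryGroup (Fin d) ℂ => W.1 a b) :=
  continuous_subtype_val.matrix_elem a b

variable [MeasurableSpace (Matrix.unitaryGroup (Fin d) ℂ)]
  [BorelSpace (Matrix.unitaryGroup (Fin d) ℂ)]
  (μ : Measure (Matrix.unitaryGroup (Fin d) ℂ)) [μ.IsHaarMeasure] [IsProbabilityMeasure μ]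

theorem integrable_quartic (i₀ a b c e : Fin d) :
    Integrable (fun W : Matrix.unitaryGroup (Fin d) ℂ =>
      W.1 a i₀ * (starRingEnd ℂ) (W.1 b i₀) * (W.1 c i₀ * (starRingEnd ℂ) (W.1 e i₀))) μ := by
  have hc : Continuous (fun W : Matrix.unitaryGroup (Fin d) ℂ =>
      W.1 a i₀ * (starRingEnd ℂ) (W.1 b i₀) * (W.1 c i₀ * (starRingEnd ℂ) (W.1 e i₀))) :=
    ((cont_entry a i₀).mul ((cont_entry b i₀).star)).mul
      ((cont_entry c i₀).mul ((cont_entry e i₀).star))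
  refine (integrable_const (1 : ℝ)).mono' hc.aestronglyMeasurable ?_
  filter_upwards with W
  have h1 := entry_norm_le W a i₀
  have h2 := entry_norm_le W b i₀
  have h3 := entry_norm_le W c i₀
  have h4 := entry_norm_le W e i₀
  simp only [norm_mul, RCLike.norm_conj]
  exact mul_le_one₀ (mul_le_one₀ h1 (norm_nonneg _) h2) (by positivity)
    (mul_le_one₀ h3 (norm_nonneg _) h4)


noncomputable def Jmom (i₀ a b c e : Fin d) : ℂ :=
  ∫ W : Matrix.unitaryGroup (Fin d) ℂ,
    W.1 a i₀ * (starRingEnd ℂ) (W.1 b i₀) * (W.1 c i₀ * (starRingEnd ℂ) (W.1 e i₀)) ∂μ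

def phaseU (t : Fin d) : Matrix.unitaryGroup (Fin d) ℂ :=
  ⟨Matrix.diagonal (fun s => if s = t then Complex.I else 1), by
    rw [Matrix.mem_unitaryGroup_iff]
    rw [Matrix.star_eq_conjTranspose, Matrix.diagonal_conjTranspose, Matrix.diagonal_mul_diagonal]
    have : (fun s => (if s = t then Complex.I else 1) * star (fun s => if s = t then Complex.I else 1) s)
        = fun _ => (1 : ℂ) := by
      funext s
      by_cases h : s = t <;> simp [h, Pi.star_apply, Complex.star_def]
    calc Matrix.diagonal (fun i => (if i = t then Complex.I else 1) *
          star (fun s => if s = t then Complex.I else 1) i)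
        = Matrix.diagonal (fun _ => (1 : ℂ)) := by rw [this]
      _ = 1 := Matrix.diagonal_one⟩

theorem phase_inv (i₀ t a b c e : Fin d) :
    Jmom μ i₀ a b c e =
      ((if a = t then Complex.I else 1) * (if b = t then -Complex.I else 1) *
        ((if c = t then Complex.I else 1) * (if e = t then -Complex.I else 1))) *
      Jmom μ i₀ a b c e := by
  have hinv := integral_mul_left_eq_self (μ := μ)
    (fun W : Matrix.unitaryGroup (Fin d) ℂ =>
      W.1 a i₀ * (starRingEnd ℂ) (W.1 b i₀) * (W.1 c i₀ * (starRingEnd ℂ) (W.1 e i₀)))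
    (phaseU t)
  unfold Jmom
  conv_lhs => rw [← hinv]
  have hentry : ∀ (W : Matrix.unitaryGroup (Fin d) ℂ) (s : Fin d),
      ((phaseU t * W).1) s i₀ = (if s = t then Complex.I else 1) * W.1 s i₀ := by
    intro W s
    show ((phaseU t).1 * W.1) s i₀ = _
    rw [show (phaseU t).1 = Matrix.diagonal (fun s => if s = t then Complex.I else 1) from rfl]
    rw [Matrix.diagonal_mul]
  calc (∫ W : Matrix.unitaryGroup (Fin d) ℂ,
      ((phaseU t * W).1 a i₀ * (starRingEnd ℂ) ((phaseU t * W).1 b i₀) *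
        ((phaseU t * W).1 c i₀ * (starRingEnd ℂ) ((phaseU t * W).1 e i₀))) ∂μ)
      = ∫ W : Matrix.unitaryGroup (Fin d) ℂ,
        ((if a = t then Complex.I else 1) * (if b = t then -Complex.I else 1) *
          ((if c = t then Complex.I else 1) * (if e = t then -Complex.I else 1))) *
        (W.1 a i₀ * (starRingEnd ℂ) (W.1 b i₀) * (W.1 c i₀ * (starRingEnd ℂ) (W.1 e i₀))) ∂μ := by
        refine integral_congr_ae (Filter.Eventually.of_forall fun W => ?_)
        dsimp only
        rw [hentry W a, hentry W b, hentry W c, hentry W e]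
        rw [RingHom.map_mul, RingHom.map_mul]
        have h1 : (starRingEnd ℂ) (if b = t then Complex.I else 1) = (if b = t then -Complex.I else 1) := by
          by_cases h : b = t <;> simp [h]
        have h2 : (starRingEnd ℂ) (if e = t then Complex.I else 1) = (if e = t then -Complex.I else 1) := by
          by_cases h : e = t <;> simp [h]
        rw [h1, h2]
        ring
    _ = _ := integral_const_mul _ _

theorem eq_zero_of_self_eq_mul {p J : ℂ} (hp : p ≠ 1) (h : J = p * J) : J = 0 := by
  have h2 : (1 - p) * J = 0 := by linear_combination h
  rcases mul_eq_zero.mp h2 with h3 | h3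
  · exact absurd (by linear_combination -h3) hp
  · exact h3

theorem Jmom_eq_zero (i₀ a b c e : Fin d) (h1 : ¬(a = b ∧ c = e)) (h2 : ¬(a = e ∧ c = b)) :
    Jmom μ i₀ a b c e = 0 := by
  by_cases hba : b = a
  · by_cases hea : e = a
    · -- b = a, e = a; then c ≠ a (else h1)
      have hca : ¬ c = a := fun hca => h1 ⟨hba.symm, by rw [hca, hea]⟩
      have := phase_inv μ i₀ a a b c e
      simp only [if_pos rfl, if_pos hba, if_neg hca, if_pos hea] at this
      exact eq_zero_of_self_eq_mul (by
        simp only [if_true]; norm_num [Complex.ext_iff]) this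
    · -- b = a, e ≠ a; then c ≠ e (else h1)
      have hce : ¬ c = e := fun hce => h1 ⟨hba.symm, hce⟩
      have hae : ¬ a = e := fun h => hea (h.symm)
      have hbe : ¬ b = e := by rw [hba]; exact hae
      have := phase_inv μ i₀ e a b c e
      simp only [if_neg hae, if_neg hbe, if_neg hce, if_pos rfl] at this
      exact eq_zero_of_self_eq_mul (by
        simp only [if_true]; norm_num [Complex.ext_iff]) this
  · by_cases hea : e = a
    · -- e = a, b ≠ a; then c ≠ b (else h2)
      have hcb : ¬ c = b := fun hcb => h2 ⟨hea.symm, hcb⟩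
      have hab : ¬ a = b := fun h => hba h.symm
      have heb : ¬ e = b := by rw [hea]; exact hab
      have := phase_inv μ i₀ b a b c e
      simp only [if_neg hab, if_pos rfl, if_neg hcb, if_neg heb] at this
      exact eq_zero_of_self_eq_mul (by
        simp only [if_true]; norm_num [Complex.ext_iff]) this
    · -- b ≠ a, e ≠ a
      have := phase_inv μ i₀ a a b c e
      simp only [if_pos rfl, if_neg hba, if_neg hea] at this
      by_cases hca : c = a
      · rw [if_pos hca] at this
        exact eq_zero_of_self_eq_mul (by
          simp only [if_true]; norm_num [Complex.ext_iff]) this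
      · rw [if_neg hca] at this
        exact eq_zero_of_self_eq_mul (by
          simp only [if_true]; norm_num [Complex.ext_iff]) this

def permU (σ : Equiv.Perm (Fin d)) : Matrix.unitaryGroup (Fin d) ℂ :=
  ⟨Matrix.of (fun x y => if y = σ x then (1 : ℂ) else 0), by
    rw [Matrix.mem_unitaryGroup_iff]
    ext x y
    rw [Matrix.mul_apply]
    simp only [Matrix.star_apply, Matrix.of_apply, apply_ite (star : ℂ → ℂ), star_one, star_zero]
    rw [Finset.sum_eq_single (σ x)]
    · by_cases h : x = y
      · subst h; simp
      · have : ¬ σ x = σ y := fun hh => h (σ.injective hh)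
        simp [this, Matrix.one_apply, h]
    · intro k _ hk; simp [hk]
    · intro h; exact absurd (Finset.mem_univ _) h⟩

theorem permU_entry (σ : Equiv.Perm (Fin d)) (W : Matrix.unitaryGroup (Fin d) ℂ) (s j : Fin d) :
    ((permU σ * W).1) s j = W.1 (σ s) j := by
  show ((permU σ).1 * W.1) s j = _
  rw [Matrix.mul_apply]
  rw [Finset.sum_eq_single (σ s)]
  · simp [permU]
  · intro k _ hk; simp [permU, hk]
  · intro h; exact absurd (Finset.mem_univ _) h

theorem perm_inv (i₀ : Fin d) (σ : Equiv.Perm (Fin d)) (a b c e : Fin d) :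
    Jmom μ i₀ (σ a) (σ b) (σ c) (σ e) = Jmom μ i₀ a b c e := by
  have hinv := integral_mul_left_eq_self (μ := μ)
    (fun W : Matrix.unitaryGroup (Fin d) ℂ =>
      W.1 a i₀ * (starRingEnd ℂ) (W.1 b i₀) * (W.1 c i₀ * (starRingEnd ℂ) (W.1 e i₀)))
    (permU σ)
  unfold Jmom
  rw [← hinv]
  refine integral_congr_ae (Filter.Eventually.of_forall fun W => ?_)
  dsimp only
  rw [permU_entry, permU_entry, permU_entry, permU_entry]

noncomputable def rotU (a b : Fin d) (hab : a ≠ b) : Matrix.unitaryGroup (Fin d) ℂ :=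
  ⟨rotM a b, rotM_mem a b hab⟩

theorem rotU_entry_a (a b : Fin d) (hab : a ≠ b) (W : Matrix.unitaryGroup (Fin d) ℂ) (j : Fin d) :
    ((rotU a b hab * W).1) a j = rc * W.1 a j + rc * W.1 b j := by
  show ((rotM a b) * W.1) a j = _
  rw [Matrix.mul_apply]
  have hrow : ∀ k, rotM a b a k = if k = a then rc else if k = b then rc else 0 := fun k => by
    unfold rotM; simp
  rw [Finset.sum_congr rfl (fun k _ => by rw [hrow k] :
    ∀ k ∈ Finset.univ, rotM a b a k * W.1 k j
      = (if k = a then rc else if k = b then rc else 0) * W.1 k j)]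
  exact sum_two hab rc rc _

theorem Jmom_swap_conj (i₀ a b c e : Fin d) :
    Jmom μ i₀ a b c e = Jmom μ i₀ a e c b := by
  unfold Jmom
  refine integral_congr_ae (Filter.Eventually.of_forall fun W => ?_)
  ring

theorem alpha_two_beta (i₀ a b : Fin d) (hab : a ≠ b) :
    Jmom μ i₀ a a a a = 2 * Jmom μ i₀ a a b b := by
  have hinv := integral_mul_left_eq_self (μ := μ)
    (fun W : Matrix.unitaryGroup (Fin d) ℂ =>
      W.1 a i₀ * (starRingEnd ℂ) (W.1 a i₀) * (W.1 a i₀ * (starRingEnd ℂ) (W.1 a i₀)))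
    (rotU a b hab)
  have hpt : ∀ W : Matrix.unitaryGroup (Fin d) ℂ,
      (rotU a b hab * W).1 a i₀ * (starRingEnd ℂ) ((rotU a b hab * W).1 a i₀) *
        ((rotU a b hab * W).1 a i₀ * (starRingEnd ℂ) ((rotU a b hab * W).1 a i₀))
      = (1/4 : ℂ) * ∑ v : Fin 2 × Fin 2 × Fin 2 × Fin 2,
          (W.1 (![a,b] v.1) i₀ * (starRingEnd ℂ) (W.1 (![a,b] v.2.1) i₀) *
            (W.1 (![a,b] v.2.2.1) i₀ * (starRingEnd ℂ) (W.1 (![a,b] v.2.2.2) i₀))) := by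
    intro W
    rw [rotU_entry_a a b hab W i₀]
    simp only [RingHom.map_add, RingHom.map_mul, rc_real, Fintype.sum_prod_type, Fin.sum_univ_two,
      Matrix.cons_val_zero, Matrix.cons_val_one, Matrix.head_cons]
    linear_combination ((rc * rc + 1/2) *
      ((W.1 a i₀ + W.1 b i₀) * ((starRingEnd ℂ) (W.1 a i₀) + (starRingEnd ℂ) (W.1 b i₀)) *
        ((W.1 a i₀ + W.1 b i₀) * ((starRingEnd ℂ) (W.1 a i₀) + (starRingEnd ℂ) (W.1 b i₀))))) *
      rc_mul_rc
  have E : Jmom μ i₀ a a a a = (1/4 : ℂ) * ∑ v : Fin 2 × Fin 2 × Fin 2 × Fin 2,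
      Jmom μ i₀ (![a,b] v.1) (![a,b] v.2.1) (![a,b] v.2.2.1) (![a,b] v.2.2.2) := by
    unfold Jmom
    rw [← hinv]
    rw [integral_congr_ae (Filter.Eventually.of_forall hpt)]
    rw [integral_const_mul]
    congr 1
    rw [integral_finset_sum _ (fun v _ => integrable_quartic μ i₀ _ _ _ _)]
  simp only [Fintype.sum_prod_type, Fin.sum_univ_two,
    Matrix.cons_val_zero, Matrix.cons_val_one, Matrix.head_cons] at E
  have hba : b ≠ a := Ne.symm hab
  have z1 := Jmom_eq_zero μ i₀ a a a b (by simp [hab, hba]) (by simp [hab, hba])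
  have z2 := Jmom_eq_zero μ i₀ a a b a (by simp [hab, hba]) (by simp [hab, hba])
  have z3 := Jmom_eq_zero μ i₀ a b a a (by simp [hab, hba]) (by simp [hab, hba])
  have z4 := Jmom_eq_zero μ i₀ b a a a (by simp [hab, hba]) (by simp [hab, hba])
  have z5 := Jmom_eq_zero μ i₀ a b b b (by simp [hab, hba]) (by simp [hab, hba])
  have z6 := Jmom_eq_zero μ i₀ b a b b (by simp [hab, hba]) (by simp [hab, hba])
  have z7 := Jmom_eq_zero μ i₀ b b a b (by simp [hab, hba]) (by simp [hab, hba])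
  have z8 := Jmom_eq_zero μ i₀ b b b a (by simp [hab, hba]) (by simp [hab, hba])
  have z9 := Jmom_eq_zero μ i₀ a b a b (by simp [hab, hba]) (by simp [hab, hba])
  have z10 := Jmom_eq_zero μ i₀ b a b a (by simp [hab, hba]) (by simp [hab, hba])
  have hp : Jmom μ i₀ b b b b = Jmom μ i₀ a a a a := by
    simpa using perm_inv μ i₀ (Equiv.swap a b) a a a a
  have hq : Jmom μ i₀ b b a a = Jmom μ i₀ a a b b := by
    simpa using perm_inv μ i₀ (Equiv.swap a b) a a b b
  have hs1 : Jmom μ i₀ a b b a = Jmom μ i₀ a a b b := Jmom_swap_conj μ i₀ a b b a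
  have hs2 : Jmom μ i₀ b a a b = Jmom μ i₀ a a b b :=
    (Jmom_swap_conj μ i₀ b a a b).trans hq
  rw [z1, z2, z3, z4, z5, z6, z7, z8, z9, z10, hp, hq, hs1, hs2] at E
  linear_combination 2 * E

theorem Jmom_sum_one (i₀ : Fin d) : ∑ s : Fin d, ∑ t : Fin d, Jmom μ i₀ s s t t = 1 := by
  unfold Jmom
  rw [Finset.sum_congr rfl (fun s _ =>
    (integral_finset_sum _ (fun t _ => integrable_quartic μ i₀ s s t t)).symm :
    ∀ s ∈ Finset.univ, _ = ∫ W : Matrix.unitaryGroup (Fin d) ℂ,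
      ∑ t : Fin d, W.1 s i₀ * (starRingEnd ℂ) (W.1 s i₀) *
        (W.1 t i₀ * (starRingEnd ℂ) (W.1 t i₀)) ∂μ)]
  rw [← integral_finset_sum _ (fun s _ => integrable_finset_sum _
    (fun t _ => integrable_quartic μ i₀ s s t t))]
  have hpt : ∀ W : Matrix.unitaryGroup (Fin d) ℂ,
      (∑ s : Fin d, ∑ t : Fin d, W.1 s i₀ * (starRingEnd ℂ) (W.1 s i₀) *
        (W.1 t i₀ * (starRingEnd ℂ) (W.1 t i₀))) = 1 := by
    intro W
    rw [← Finset.sum_mul_sum Finset.univ Finset.univ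
      (fun s => W.1 s i₀ * (starRingEnd ℂ) (W.1 s i₀))
      (fun t => W.1 t i₀ * (starRingEnd ℂ) (W.1 t i₀))]
    have hc : ∑ s : Fin d, W.1 s i₀ * (starRingEnd ℂ) (W.1 s i₀) = 1 := col_sum W i₀
    rw [hc, one_mul]
  rw [integral_congr_ae (Filter.Eventually.of_forall hpt)]
  simp

theorem Jmom_diag_eq (i₀ s a : Fin d) : Jmom μ i₀ s s s s = Jmom μ i₀ a a a a := by
  simpa using perm_inv μ i₀ (Equiv.swap a s) a a a a

theorem Jmom_pair_eq (i₀ : Fin d) (s t a b : Fin d) (hst : s ≠ t) (hab : a ≠ b) :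
    Jmom μ i₀ s s t t = Jmom μ i₀ a a b b := by
  obtain ⟨σ, h1, h2⟩ : ∃ σ : Equiv.Perm (Fin d), σ a = s ∧ σ b = t := by
    by_cases hbt : Equiv.swap a s b = t
    · exact ⟨Equiv.swap a s, by simp, hbt⟩
    · refine ⟨(Equiv.swap a s).trans (Equiv.swap (Equiv.swap a s b) t), ?_, ?_⟩
      · rw [Equiv.trans_apply, Equiv.swap_apply_left]
        refine Equiv.swap_apply_of_ne_of_ne ?_ hst
        intro h
        exact hab (Equiv.injective _ (by rw [Equiv.swap_apply_left, ← h]))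
      · rw [Equiv.trans_apply, Equiv.swap_apply_left]
  have h := perm_inv μ i₀ σ a a b b
  rw [h1, h2] at h
  exact h

theorem beta_val (i₀ : Fin d) (hd2 : 2 ≤ d) (a b : Fin d) (hab : a ≠ b) :
    Jmom μ i₀ a a b b = 1 / ((d : ℂ) * ((d : ℂ) + 1)) := by
  have hsum := Jmom_sum_one μ i₀
  have hrow : ∀ s : Fin d, ∑ t : Fin d, Jmom μ i₀ s s t t
      = 2 * Jmom μ i₀ a a b b + ((d : ℂ) - 1) * Jmom μ i₀ a a b b := by
    intro s
    rw [← Finset.add_sum_erase Finset.univ _ (Finset.mem_univ s)]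
    congr 1
    · exact (Jmom_diag_eq μ i₀ s a).trans (alpha_two_beta μ i₀ a b hab)
    · rw [Finset.sum_congr rfl (fun t ht =>
        Jmom_pair_eq μ i₀ s t a b (Ne.symm (Finset.mem_erase.mp ht).1) hab)]
      rw [Finset.sum_const, Finset.card_erase_of_mem (Finset.mem_univ s)]
      rw [Finset.card_univ, Fintype.card_fin]
      rw [nsmul_eq_mul, Nat.cast_sub (by omega : 1 ≤ d), Nat.cast_one]
  rw [Finset.sum_congr rfl (fun s _ => hrow s), Finset.sum_const, Finset.card_univ,
    Fintype.card_fin, nsmul_eq_mul] at hsum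
  have hd0 : (d : ℂ) ≠ 0 := Nat.cast_ne_zero.mpr (by omega)
  have hd1 : (d : ℂ) + 1 ≠ 0 := by
    have : ((d + 1 : ℕ) : ℂ) ≠ 0 := Nat.cast_ne_zero.mpr (by omega)
    push_cast at this
    exact this
  field_simp
  linear_combination hsum

end HaarAux

/-- The swap operator `S` on `ℂ^d ⊗ ℂ^d`, `S[(i,j),(k,l)] = δ_{il} δ_{jk}`. -/
def swapOp (d : ℕ) : Matrix (Fin d × Fin d) (Fin d × Fin d) ℂ :=
  fun p q => if p.1 = q.2 ∧ p.2 = q.1 then 1 else 0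

/-- **Second-moment of a Haar-random pure state.** Entrywise,
`∫ (W|e₀⟩⟨e₀|W†) ⊗ (W|e₀⟩⟨e₀|W†) dμ(W) = (I + S)/(d(d+1))`,
where `μ` is the normalized Haar probability measure on `U(d)`. -/
theorem haar_average_two_copies (d : ℕ) (hd : 1 ≤ d)
    [MeasurableSpace (Matrix.unitaryGroup (Fin d) ℂ)]
    [BorelSpace (Matrix.unitaryGroup (Fin d) ℂ)]
    (μ : Measure (Matrix.unitaryGroup (Fin d) ℂ))
    [μ.IsHaarMeasure] [IsProbabilityMeasure μ]
    (i₀ : Fin d) (p q : Fin d × Fin d) :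
    (∫ W : Matrix.unitaryGroup (Fin d) ℂ,
        ((vecMulVec (W.1.mulVec (Pi.single i₀ 1)) (star (W.1.mulVec (Pi.single i₀ 1)))
          ⊗ₖ vecMulVec (W.1.mulVec (Pi.single i₀ 1)) (star (W.1.mulVec (Pi.single i₀ 1)))) p q) ∂μ)
      = ((1 : Matrix (Fin d × Fin d) (Fin d × Fin d) ℂ) + swapOp d) p q
          / ((d : ℂ) * ((d : ℂ) + 1)) := by
  have hL : (∫ W : Matrix.unitaryGroup (Fin d) ℂ,
        ((vecMulVec (W.1.mulVec (Pi.single i₀ 1)) (star (W.1.mulVec (Pi.single i₀ 1)))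
          ⊗ₖ vecMulVec (W.1.mulVec (Pi.single i₀ 1)) (star (W.1.mulVec (Pi.single i₀ 1)))) p q) ∂μ)
      = Jmom μ i₀ p.1 q.1 p.2 q.2 := by
    unfold Jmom
    refine integral_congr_ae (Filter.Eventually.of_forall fun W => ?_)
    simp [Matrix.kroneckerMap_apply, Matrix.vecMulVec_apply, Matrix.mulVec_single,
      Pi.star_apply, Complex.star_def, mul_one]
  rw [hL]
  rw [Matrix.add_apply, Matrix.one_apply, swapOp]
  rcases eq_or_lt_of_le hd with hd1 | hd2
  · -- d = 1
    have hd1 : d = 1 := hd1.symm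
    subst hd1
    have hall : ∀ x y : Fin 1, x = y := fun x y => Subsingleton.elim x y
    have hpq : p = q := Prod.ext_iff.mpr ⟨hall p.1 q.1, hall p.2 q.2⟩
    rw [if_pos hpq, if_pos ⟨hall _ _, hall _ _⟩]
    have hJ : Jmom μ i₀ p.1 q.1 p.2 q.2 = 1 := by
      unfold Jmom
      have hpt : ∀ W : Matrix.unitaryGroup (Fin 1) ℂ,
          W.1 p.1 i₀ * (starRingEnd ℂ) (W.1 q.1 i₀) *
            (W.1 p.2 i₀ * (starRingEnd ℂ) (W.1 q.2 i₀)) = 1 := by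
        intro W
        have hc := col_sum W i₀
        rw [Fin.sum_univ_one] at hc
        rw [hall p.1 0, hall q.1 0, hall p.2 0, hall q.2 0, hall i₀ 0] at *
        rw [show (0 : Fin 1) = 0 from rfl]
        calc W.1 0 0 * (starRingEnd ℂ) (W.1 0 0) * (W.1 0 0 * (starRingEnd ℂ) (W.1 0 0))
            = (W.1 0 0 * (starRingEnd ℂ) (W.1 0 0)) * (W.1 0 0 * (starRingEnd ℂ) (W.1 0 0)) := by
              ring
          _ = 1 * 1 := by rw [hc]
          _ = 1 := one_mul 1
      rw [integral_congr_ae (Filter.Eventually.of_forall hpt)]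
      simp
    rw [hJ]
    norm_num
  · -- 2 ≤ d
    have hd2' : 2 ≤ d := hd2
    haveI : Nontrivial (Fin d) := Fin.nontrivial_iff_two_le.mpr hd2'
    have hd0 : (d : ℂ) ≠ 0 := Nat.cast_ne_zero.mpr (by omega)
    have hdd1 : (d : ℂ) + 1 ≠ 0 := by
      have : ((d + 1 : ℕ) : ℂ) ≠ 0 := Nat.cast_ne_zero.mpr (by omega)
      push_cast at this
      exact this
    by_cases h1 : p = q
    · by_cases h2 : p.1 = q.2 ∧ p.2 = q.1
      · -- all four indices equal
        rw [if_pos h1, if_pos h2]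
        have e1 : q.1 = p.1 := by rw [h1]
        have e2 : q.2 = p.2 := by rw [h1]
        have e3 : p.2 = p.1 := by rw [← e1, ← h2.2]
        rw [e1, e2, e3]
        obtain ⟨b, hb⟩ := exists_ne p.1
        rw [alpha_two_beta μ i₀ p.1 b (Ne.symm hb), beta_val μ i₀ hd2' p.1 b (Ne.symm hb)]
        ring
      · -- p = q, not swap: β
        rw [if_pos h1, if_neg h2]
        have e1 : q.1 = p.1 := by rw [h1]
        have e2 : q.2 = p.2 := by rw [h1]
        have hne : p.1 ≠ p.2 := by
          intro h
          exact h2 ⟨by rw [e2, h], by rw [e1, h]⟩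
        rw [e1, e2, beta_val μ i₀ hd2' p.1 p.2 hne]
        ring
    · by_cases h2 : p.1 = q.2 ∧ p.2 = q.1
      · -- swap only
        rw [if_neg h1, if_pos h2]
        have e1 : q.1 = p.2 := h2.2.symm
        have e2 : q.2 = p.1 := h2.1.symm
        have hne : p.1 ≠ p.2 := by
          intro h
          exact h1 (Prod.ext_iff.mpr ⟨by rw [e1]; exact h, by rw [e2]; exact h.symm⟩)
        rw [e1, e2]
        rw [Jmom_swap_conj μ i₀ p.1 p.2 p.2 p.1, beta_val μ i₀ hd2' p.1 p.2 hne]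
        ring
      · -- zero
        rw [if_neg h1, if_neg h2]
        have hz : Jmom μ i₀ p.1 q.1 p.2 q.2 = 0 := by
          refine Jmom_eq_zero μ i₀ p.1 q.1 p.2 q.2 ?_ h2
          intro h
          exact h1 (Prod.ext_iff.mpr h)
        rw [hz]
        norm_num
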